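/- Then M ·ᵥ Δẏ = (M·ΔL̇) ·ᵥ b + M ·ᵥ u̇ holds μ-almost everywhere, and consequently b = B⁻¹ · ∫ Żᵀ ·ᵥ (M ·ᵥ Δẏ) dμ. (Robinson-type identification of the homogeneous coefficient b in the model combining random coefficients with common parameters.) -/

import Mathlib

open MeasureTheory Matrix

/-- Robinson-type identification of the homogeneous coefficient `b` in the model combining
random coefficients with common parameters: `M ·ᵥ Δẏ = (M·ΔL̇) ·ᵥ b + M ·ᵥ u̇` a.e., and
consequently `b = B⁻¹ · ∫ Żᵀ ·ᵥ (M ·ᵥ Δẏ) dμ`. -/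
theorem homogeneous_coefficient_identification
    {Ω : Type*} {mΩ : MeasurableSpace Ω} (μ : Measure Ω) [IsProbabilityMeasure μ]
    (𝒢 ℋ : MeasurableSpace Ω) (h𝒢ℋ : 𝒢 ≤ ℋ) (hℋ : ℋ ≤ mΩ)
    (m q : ℕ) (hm : 0 < m) (hq : 0 < q)
    (M : Ω → Matrix (Fin m) (Fin m) ℝ)
    (hMmeas : ∀ s t, StronglyMeasurable[ℋ] fun ω => M ω s t)
    (hMbdd : ∀ ω s t, |M ω s t| ≤ 1)
    (Ldot Z : Ω → Matrix (Fin m) (Fin q) ℝ)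
    (hLmeas : ∀ s j, StronglyMeasurable[ℋ] fun ω => Ldot ω s j)
    (hLint : ∀ s j, Integrable (fun ω => Ldot ω s j) μ)
    (hZmeas : ∀ s j, StronglyMeasurable[ℋ] fun ω => Z ω s j)
    (hZint : ∀ s j, Integrable (fun ω => Z ω s j) μ)
    (g : Ω → Fin m → ℝ) (hgmeas : ∀ s, StronglyMeasurable[𝒢] fun ω => g ω s)
    (hgint : Integrable g μ)
    (udot : Ω → Fin m → ℝ) (huint : Integrable udot μ)
    (hu : ∀ s, μ[(fun ω => udot ω s) | ℋ] =ᵐ[μ] 0)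
    (h : Ω → Fin m → ℝ) (hhint : Integrable h μ) (hMh : ∀ᵐ ω ∂μ, M ω *ᵥ h ω = 0)
    (b : Fin q → ℝ)
    (ydot : Ω → Fin m → ℝ) (hy : ∀ ω, ydot ω = Ldot ω *ᵥ b + g ω + h ω + udot ω)
    (ℳ : Ω → Matrix (Fin m) (Fin m) ℝ)
    (hℳ : ∀ s t, (fun ω => ℳ ω s t) = μ[(fun ω => M ω s t) | 𝒢])
    (hℳinv : ∀ᵐ ω ∂μ, IsUnit (ℳ ω))
    (ML : Ω → Matrix (Fin m) (Fin q) ℝ)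
    (hML : ∀ s j, (fun ω => ML ω s j) = μ[(fun ω => (M ω * Ldot ω) s j) | 𝒢])
    (k : Ω → Fin m → ℝ)
    (hk : ∀ s, (fun ω => k ω s) = μ[(fun ω => (M ω *ᵥ ydot ω) s) | 𝒢])
    (Δydot : Ω → Fin m → ℝ) (hΔy : ∀ ω, Δydot ω = ydot ω - (ℳ ω)⁻¹ *ᵥ k ω)
    (ΔLdot : Ω → Matrix (Fin m) (Fin q) ℝ)
    (hΔL : ∀ ω, ΔLdot ω = Ldot ω - (ℳ ω)⁻¹ * ML ω)
    (hint1 : ∀ i j, Integrable (fun ω => ((Z ω)ᵀ * M ω * ΔLdot ω) i j) μ)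
    (hint2 : ∀ j, Integrable (fun ω => ((Z ω)ᵀ *ᵥ (M ω *ᵥ Δydot ω)) j) μ)
    (hint3 : ∀ i s t, Integrable (fun ω => ((Z ω)ᵀ * M ω) i s * udot ω t) μ)
    (B : Matrix (Fin q) (Fin q) ℝ)
    (hB : ∀ i j, B i j = ∫ ω, ((Z ω)ᵀ * M ω * ΔLdot ω) i j ∂μ)
    (hBinv : IsUnit B) :
    (∀ᵐ ω ∂μ, M ω *ᵥ Δydot ω = (M ω * ΔLdot ω) *ᵥ b + M ω *ᵥ udot ω)
      ∧ b = B⁻¹ *ᵥ fun j => ∫ ω, ((Z ω)ᵀ *ᵥ (M ω *ᵥ Δydot ω)) j ∂μ := by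
  classical
  have hGΩ : 𝒢 ≤ mΩ := h𝒢ℋ.trans hℋ
  -- coordinatewise integrability of vector-valued functions
  have igc : ∀ t, Integrable (fun ω => g ω t) μ := fun t =>
    (ContinuousLinearMap.proj (R := ℝ) (φ := fun _ : Fin m => ℝ) t).integrable_comp hgint
  have iuc : ∀ t, Integrable (fun ω => udot ω t) μ := fun t =>
    (ContinuousLinearMap.proj (R := ℝ) (φ := fun _ : Fin m => ℝ) t).integrable_comp huint
  have ihc : ∀ t, Integrable (fun ω => h ω t) μ := fun t =>
    (ContinuousLinearMap.proj (R := ℝ) (φ := fun _ : Fin m => ℝ) t).integrable_comp hhint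
  have aM : ∀ s t, AEStronglyMeasurable[mΩ] (fun ω => M ω s t) μ := fun s t =>
    ((hMmeas s t).mono hℋ).aestronglyMeasurable
  have hMbdd' : ∀ s t, ∀ᵐ ω ∂μ, ‖M ω s t‖ ≤ 1 := fun s t =>
    Filter.Eventually.of_forall fun ω => by simpa [Real.norm_eq_abs] using hMbdd ω s t
  have iM : ∀ s t, Integrable (fun ω => M ω s t) μ := fun s t =>
    (integrable_const (1 : ℝ)).mono' (aM s t) (hMbdd' s t)
  have iMmul : ∀ (f : Ω → ℝ), Integrable f μ → ∀ s t,
      Integrable (fun ω => M ω s t * f ω) μ :=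
    fun f hf s t => hf.bdd_mul (aM s t) (hMbdd' s t)
  have iML : ∀ s j, Integrable (fun ω => (M ω * Ldot ω) s j) μ := by
    intro s j
    have e : (fun ω => (M ω * Ldot ω) s j) = fun ω => ∑ t, M ω s t * Ldot ω t j := by
      funext ω; simp [Matrix.mul_apply]
    rw [e]
    exact integrable_finset_sum _ fun t _ => iMmul _ (hLint t j) s t
  -- Step A : conditional expectation of k
  have kA : ∀ s, (fun ω => k ω s) =ᵐ[μ]
      fun ω => (ML ω *ᵥ b) s + (ℳ ω *ᵥ g ω) s := by
    intro s
    set P1 : Ω → ℝ := fun ω => ((M ω * Ldot ω) *ᵥ b) s with hP1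
    set P2 : Ω → ℝ := fun ω => (M ω *ᵥ g ω) s with hP2
    set P3 : Ω → ℝ := fun ω => (M ω *ᵥ h ω) s with hP3
    set P4 : Ω → ℝ := fun ω => (M ω *ᵥ udot ω) s with hP4
    have hdec : (fun ω => (M ω *ᵥ ydot ω) s) = P1 + P2 + P3 + P4 := by
      funext ω
      simp only [hP1, hP2, hP3, hP4, Pi.add_apply, hy ω, Matrix.mulVec_add,
        Matrix.mulVec_mulVec]
    have iP1 : Integrable P1 μ := by
      have e : P1 = fun ω => ∑ j, (M ω * Ldot ω) s j * b j := by
        funext ω; simp [hP1, Matrix.mulVec, dotProduct]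
      rw [e]; exact integrable_finset_sum _ fun j _ => (iML s j).mul_const _
    have iP2 : Integrable P2 μ := by
      have e : P2 = fun ω => ∑ t, M ω s t * g ω t := by
        funext ω; simp [hP2, Matrix.mulVec, dotProduct]
      rw [e]; exact integrable_finset_sum _ fun t _ => iMmul _ (igc t) s t
    have iP3 : Integrable P3 μ := by
      have e : P3 = fun ω => ∑ t, M ω s t * h ω t := by
        funext ω; simp [hP3, Matrix.mulVec, dotProduct]
      rw [e]; exact integrable_finset_sum _ fun t _ => iMmul _ (ihc t) s t
    have iP4 : Integrable P4 μ := by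
      have e : P4 = fun ω => ∑ t, M ω s t * udot ω t := by
        funext ω; simp [hP4, Matrix.mulVec, dotProduct]
      rw [e]; exact integrable_finset_sum _ fun t _ => iMmul _ (iuc t) s t
    have c1 : μ[P1|𝒢] =ᵐ[μ] fun ω => (ML ω *ᵥ b) s := by
      have e : P1 = ∑ j : Fin q, b j • fun ω => (M ω * Ldot ω) s j := by
        funext ω
        simp [hP1, Matrix.mulVec, dotProduct, Finset.sum_apply, mul_comm]
      rw [e]
      refine (condExp_finset_sum (fun j _ => ((iML s j).smul (b j))) 𝒢).trans ?_
      have hsm : ∀ᵐ ω ∂μ, ∀ j : Fin q,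
          (μ[b j • fun ω => (M ω * Ldot ω) s j|𝒢]) ω
            = b j • (μ[fun ω => (M ω * Ldot ω) s j|𝒢]) ω :=
        ae_all_iff.2 fun j => condExp_smul (b j) _ 𝒢
      filter_upwards [hsm] with ω hω
      rw [Finset.sum_apply, Finset.sum_congr rfl fun j _ => hω j]
      simp only [← hML]
      simp [Matrix.mulVec, dotProduct, smul_eq_mul, mul_comm]
    have c2 : μ[P2|𝒢] =ᵐ[μ] fun ω => (ℳ ω *ᵥ g ω) s := by
      have e : P2 = ∑ t : Fin m, (fun ω => g ω t) * fun ω => M ω s t := by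
        funext ω
        simp [hP2, Matrix.mulVec, dotProduct, Finset.sum_apply, mul_comm]
      rw [e]
      have iterm : ∀ t : Fin m,
          Integrable ((fun ω => g ω t) * fun ω => M ω s t) μ := fun t =>
        (iMmul _ (igc t) s t).congr
          (Filter.Eventually.of_forall fun ω => (mul_comm _ _))
      refine (condExp_finset_sum (fun t _ => iterm t) 𝒢).trans ?_
      have hterm : ∀ᵐ ω ∂μ, ∀ t : Fin m,
          (μ[(fun ω => g ω t) * fun ω => M ω s t|𝒢]) ω
            = g ω t * (μ[fun ω => M ω s t|𝒢]) ω := by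
        refine ae_all_iff.2 fun t => ?_
        have := condExp_mul_of_stronglyMeasurable_left (hgmeas t) (iterm t) (iM s t)
        filter_upwards [this] with ω hω
        simpa using hω
      filter_upwards [hterm] with ω hω
      rw [Finset.sum_apply, Finset.sum_congr rfl fun t _ => hω t]
      simp only [← hℳ]
      simp [Matrix.mulVec, dotProduct, mul_comm]
    have c3 : μ[P3|𝒢] =ᵐ[μ] 0 := by
      have e : P3 =ᵐ[μ] (0 : Ω → ℝ) := by
        filter_upwards [hMh] with ω hω
        simp [hP3, hω]
      exact (condExp_congr_ae e).trans (by rw [condExp_zero])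
    have c4 : μ[P4|𝒢] =ᵐ[μ] 0 := by
      have hH : μ[P4|ℋ] =ᵐ[μ] 0 := by
        have e : P4 = ∑ t : Fin m, (fun ω => M ω s t) * fun ω => udot ω t := by
          funext ω; simp [hP4, Matrix.mulVec, dotProduct, Finset.sum_apply]
        rw [e]
        have iterm : ∀ t : Fin m,
            Integrable ((fun ω => M ω s t) * fun ω => udot ω t) μ := fun t =>
          (iMmul _ (iuc t) s t).congr (Filter.Eventually.of_forall fun ω => rfl)
        refine (condExp_finset_sum (fun t _ => iterm t) ℋ).trans ?_
        have hterm : ∀ᵐ ω ∂μ, ∀ t : Fin m,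
            (μ[(fun ω => M ω s t) * fun ω => udot ω t|ℋ]) ω = 0 := by
          refine ae_all_iff.2 fun t => ?_
          have h1 := condExp_mul_of_stronglyMeasurable_left (hMmeas s t) (iterm t) (iuc t)
          filter_upwards [h1, hu t] with ω hω hω0
          simp only [Pi.zero_apply] at hω0
          simp [hω, hω0]
        filter_upwards [hterm] with ω hω
        simp [Finset.sum_apply, hω]
      calc μ[P4|𝒢] =ᵐ[μ] μ[μ[P4|ℋ]|𝒢] := (condExp_condExp_of_le h𝒢ℋ hℋ).symm
        _ =ᵐ[μ] μ[(0 : Ω → ℝ)|𝒢] := condExp_congr_ae hH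
        _ = 0 := condExp_zero
    have big : (fun ω => k ω s) =ᵐ[μ] μ[P1|𝒢] + μ[P2|𝒢] + μ[P3|𝒢] + μ[P4|𝒢] := by
      rw [hk s, hdec]
      exact (condExp_add ((iP1.add iP2).add iP3) iP4 𝒢).trans
        (((condExp_add (iP1.add iP2) iP3 𝒢).add Filter.EventuallyEq.rfl).trans
          (((condExp_add iP1 iP2 𝒢).add Filter.EventuallyEq.rfl).add Filter.EventuallyEq.rfl))
    filter_upwards [big, c1, c2, c3, c4] with ω h0 h1 h2 h3 h4
    simp only [Pi.add_apply] at h0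
    rw [h0, h1, h2, h3, h4]
    simp
  -- vector form of Step A
  have hkvec : ∀ᵐ ω ∂μ, k ω = ML ω *ᵥ b + ℳ ω *ᵥ g ω := by
    have hall : ∀ᵐ ω ∂μ, ∀ s, k ω s = (ML ω *ᵥ b) s + (ℳ ω *ᵥ g ω) s :=
      ae_all_iff.2 fun s => kA s
    filter_upwards [hall] with ω hω
    funext s
    simpa using hω s
  -- Part 1
  have hpart1 : ∀ᵐ ω ∂μ, M ω *ᵥ Δydot ω = (M ω * ΔLdot ω) *ᵥ b + M ω *ᵥ udot ω := by
    filter_upwards [hkvec, hℳinv, hMh] with ω hkω hinv hh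
    have hA : (ℳ ω)⁻¹ * ℳ ω = 1 :=
      Matrix.nonsing_inv_mul _ ((Matrix.isUnit_iff_isUnit_det _).mp hinv)
    rw [hΔy ω, hΔL ω, hy ω, hkω]
    simp only [Matrix.mulVec_sub, Matrix.mulVec_add, Matrix.mulVec_mulVec,
      Matrix.mul_sub, Matrix.sub_mulVec, hA, Matrix.one_mulVec, hh,
      Matrix.mul_one]
    abel
  refine ⟨hpart1, ?_⟩
  -- Part 2
  have key : ∀ j, ∫ ω, ((Z ω)ᵀ *ᵥ (M ω *ᵥ Δydot ω)) j ∂μ = (B *ᵥ b) j := by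
    intro j
    have haeq : (fun ω => ((Z ω)ᵀ *ᵥ (M ω *ᵥ Δydot ω)) j) =ᵐ[μ]
        fun ω => (∑ i, ((Z ω)ᵀ * M ω * ΔLdot ω) j i * b i)
          + ∑ t, ((Z ω)ᵀ * M ω) j t * udot ω t := by
      filter_upwards [hpart1] with ω hω
      rw [hω, Matrix.mulVec_add, Matrix.mulVec_mulVec, Matrix.mulVec_mulVec,
        ← Matrix.mul_assoc]
      simp [Matrix.mulVec, dotProduct]
    rw [integral_congr_ae haeq,
      integral_add (integrable_finset_sum _ fun i _ => (hint1 j i).mul_const _)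
        (integrable_finset_sum _ fun t _ => hint3 j t t),
      integral_finset_sum _ (fun i _ => (hint1 j i).mul_const _),
      integral_finset_sum _ (fun t _ => hint3 j t t)]
    have hzero : ∀ t, ∫ ω, ((Z ω)ᵀ * M ω) j t * udot ω t ∂μ = 0 := by
      intro t
      have hmeasZM : StronglyMeasurable[ℋ] fun ω => ((Z ω)ᵀ * M ω) j t := by
        have e : (fun ω => ((Z ω)ᵀ * M ω) j t) = fun ω => ∑ s, Z ω s j * M ω s t := by
          funext ω; simp [Matrix.mul_apply, Matrix.transpose_apply]
        rw [e]
        exact Finset.stronglyMeasurable_fun_sum _ fun s _ => (hZmeas s j).mul (hMmeas s t)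
      have hce : μ[(fun ω => ((Z ω)ᵀ * M ω) j t * udot ω t)|ℋ] =ᵐ[μ] 0 := by
        have h1 := condExp_mul_of_stronglyMeasurable_left hmeasZM
          ((hint3 j t t).congr (Filter.Eventually.of_forall fun ω => rfl))
          (iuc t)
        refine (h1.trans ?_)
        filter_upwards [hu t] with ω hω
        simp only [Pi.zero_apply] at hω
        simp [hω]
      rw [← integral_condExp hℋ]
      exact integral_eq_zero_of_ae hce
    have hone : ∀ i, ∫ ω, ((Z ω)ᵀ * M ω * ΔLdot ω) j i * b i ∂μ = B j i * b i := by
      intro i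
      rw [integral_mul_const, ← hB j i]
    rw [Finset.sum_congr rfl fun i _ => hone i, Finset.sum_congr rfl fun t _ => hzero t]
    simp [Matrix.mulVec, dotProduct]
  have hv : (fun j => ∫ ω, ((Z ω)ᵀ *ᵥ (M ω *ᵥ Δydot ω)) j ∂μ) = B *ᵥ b := funext key
  rw [hv, Matrix.mulVec_mulVec,
    Matrix.nonsing_inv_mul B ((Matrix.isUnit_iff_isUnit_det B).mp hBinv),
    Matrix.one_mulVec]
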